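/- Let A be a unital commutative real algebra and L : A → ℝ a linear positive semidefinite functional with L(1) = 1 whose range of Rayleigh quotients is bounded: D_a := sup{ L(a x²)/L(x²) : x ∈ A, L(x²) ≠ 0 } < ∞ for all a. If ν is any positive Radon measure on a compact K' ⊆ X(A) representing L, then D_a ≤ sup_{α ∈ K'} α(a) for every a ∈ A. -/

import Mathlib

open MeasureTheory

/-- A character of a unital commutative real algebra, as a function `A → ℝ`. -/
def IsChar {A : Type*} [CommRing A] [Algebra ℝ A] (α : A → ℝ) : Prop :=
  α 1 = 1 ∧ (∀ x y : A, α (x + y) = α x + α y) ∧ (∀ x y : A, α (x * y) = α x * α y) ∧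
    ∀ (c : ℝ) (x : A), α (c • x) = c * α x

theorem stmt_8 {A : Type*} [CommRing A] [Algebra ℝ A]
    (L : A →ₗ[ℝ] ℝ) (hpsd : ∀ x : A, 0 ≤ L (x ^ 2)) (hone : L 1 = 1)
    (hfin : ∀ a : A, BddAbove {r : ℝ | ∃ x : A, L (x ^ 2) ≠ 0 ∧ r = L (a * x ^ 2) / L (x ^ 2)})
    (K' : Set (A → ℝ)) (hK'char : ∀ α ∈ K', IsChar α) (hK'comp : IsCompact K')
    (ν : Measure K') (hrep : ∀ a : A, L a = ∫ α : K', (α : A → ℝ) a ∂ν) :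
    ∀ a : A,
      sSup {r : ℝ | ∃ x : A, L (x ^ 2) ≠ 0 ∧ r = L (a * x ^ 2) / L (x ^ 2)} ≤
        sSup {r : ℝ | ∃ α ∈ K', r = α a} := by
  intro a
  set S := sSup {r : ℝ | ∃ α ∈ K', r = α a} with hSdef
  have hchar : ∀ α : K', IsChar (α : A → ℝ) := fun α => hK'char α α.2
  -- the measure is finite
  have h1 : (1 : ℝ) = ∫ _α : K', (1 : ℝ) ∂ν := by
    have h := hrep 1
    rw [hone] at h
    calc (1 : ℝ) = ∫ α : K', (α : A → ℝ) 1 ∂ν := h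
      _ = ∫ _α : K', (1 : ℝ) ∂ν :=
          integral_congr_ae (Filter.Eventually.of_forall fun α => (hchar α).1)
  have hint1 : Integrable (fun _ : K' => (1 : ℝ)) ν := by
    by_contra h
    rw [integral_undef h] at h1
    norm_num at h1
  haveI hfinν : IsFiniteMeasure ν := by
    rcases integrable_const_iff.mp hint1 with h | h
    · norm_num at h
    · exact h
  -- measurability and boundedness of evaluations
  have hmeas : ∀ b : A, Measurable (fun α : K' => (α : A → ℝ) b) := fun b =>
    (measurable_pi_apply b).comp measurable_subtype_coe
  have hbdd : ∀ b : A, ∃ C : ℝ, ∀ α : K', |(α : A → ℝ) b| ≤ C := by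
    intro b
    have hc : IsCompact ((fun β : A → ℝ => β b) '' K') :=
      hK'comp.image (continuous_apply b)
    obtain ⟨C, hC⟩ := hc.isBounded.exists_norm_le
    exact ⟨C, fun α => hC _ ⟨α, α.2, rfl⟩⟩
  have hintb : ∀ b : A, Integrable (fun α : K' => (α : A → ℝ) b) ν := by
    intro b
    obtain ⟨C, hC⟩ := hbdd b
    exact (integrable_const C).mono' (hmeas b).aestronglyMeasurable
      (Filter.Eventually.of_forall fun α => by simpa using hC α)
  have hSbdd : BddAbove {r : ℝ | ∃ α ∈ K', r = α a} := by
    obtain ⟨C, hC⟩ := hbdd a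
    refine ⟨C, fun r hr => ?_⟩
    obtain ⟨α, hα, rfl⟩ := hr
    exact le_trans (le_abs_self _) (hC ⟨α, hα⟩)
  have hle : ∀ α : K', (α : A → ℝ) a ≤ S := fun α =>
    le_csSup hSbdd ⟨α, α.2, rfl⟩
  -- the Rayleigh set is nonempty (take x = 1)
  have hne : {r : ℝ | ∃ x : A, L (x ^ 2) ≠ 0 ∧ r = L (a * x ^ 2) / L (x ^ 2)}.Nonempty := by
    refine ⟨L (a * 1 ^ 2) / L (1 ^ 2), 1, ?_, rfl⟩
    simp [hone]
  refine csSup_le hne ?_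
  rintro r ⟨x, hx, rfl⟩
  have hpos : 0 < L (x ^ 2) := lt_of_le_of_ne (hpsd x) (Ne.symm hx)
  -- character identities
  have heq1 : (fun α : K' => (α : A → ℝ) (a * x ^ 2)) =
      fun α : K' => (α : A → ℝ) a * ((α : A → ℝ) x) ^ 2 := by
    funext α
    obtain ⟨-, -, h3, -⟩ := hchar α
    rw [h3, pow_two x, h3, ← pow_two]
  have heq2 : (fun α : K' => (α : A → ℝ) (x ^ 2)) =
      fun α : K' => ((α : A → ℝ) x) ^ 2 := by
    funext α
    obtain ⟨-, -, h3, -⟩ := hchar α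
    rw [pow_two x, h3, ← pow_two]
  have key : L (a * x ^ 2) ≤ S * L (x ^ 2) := by
    rw [hrep (a * x ^ 2), hrep (x ^ 2)]
    calc ∫ α : K', (α : A → ℝ) (a * x ^ 2) ∂ν
        = ∫ α : K', (α : A → ℝ) a * ((α : A → ℝ) x) ^ 2 ∂ν := by rw [heq1]
      _ ≤ ∫ α : K', S * ((α : A → ℝ) x) ^ 2 ∂ν := by
          refine integral_mono ?_ ?_ ?_
          · rw [← heq1]; exact hintb _
          · exact ((hintb (x ^ 2)).const_mul S).congr
              (Filter.Eventually.of_forall fun α => congrArg (fun t => S * t) (congrFun heq2 α))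
          · intro α
            exact mul_le_mul_of_nonneg_right (hle α) (sq_nonneg _)
      _ = S * ∫ α : K', ((α : A → ℝ) x) ^ 2 ∂ν := integral_const_mul _ _
      _ = S * ∫ α : K', (α : A → ℝ) (x ^ 2) ∂ν := by rw [heq2]
  exact (div_le_iff₀ hpos).mpr key
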